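/- If A₁⊕B₁ and A₂⊕B₂ are block-diagonal weighing matrices of the same weight w with blocks of matching sizes, then A₁⊕B₁ is unbiased with A₂⊕B₂ if and only if A₁ is unbiased with A₂ and B₁ is unbiased with B₂. -/

import Mathlib

open Matrix

def IsUnitWeighing {α : Type*} [Fintype α] [DecidableEq α] (w : ℕ)
    (W : Matrix α α ℂ) : Prop :=
  (∀ i j, W i j = 0 ∨ ‖W i j‖ = 1) ∧ W * Wᴴ = (w : ℂ) • 1

def Unbiased {α : Type*} [Fintype α] [DecidableEq α] (w : ℕ)
    (H K : Matrix α α ℂ) : Prop :=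
  ∃ L, IsUnitWeighing w L ∧ H * Kᴴ = (Real.sqrt w : ℂ) • L

lemma smul_one_blocks {m n : ℕ} (c : ℂ) :
    c • (1 : Matrix (Fin m ⊕ Fin n) (Fin m ⊕ Fin n) ℂ) =
      fromBlocks (c • 1) 0 0 (c • 1) := by
  rw [← fromBlocks_one, fromBlocks_smul, smul_zero, smul_zero]

lemma fromBlocks_uw {m n w : ℕ} {A : Matrix (Fin m) (Fin m) ℂ} {B : Matrix (Fin n) (Fin n) ℂ}
    (hA : IsUnitWeighing w A) (hB : IsUnitWeighing w B) :
    IsUnitWeighing w (fromBlocks A 0 0 B) := by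
  constructor
  · rintro (i | i) (j | j)
    · exact hA.1 i j
    · exact Or.inl rfl
    · exact Or.inl rfl
    · exact hB.1 i j
  · rw [fromBlocks_conjTranspose, fromBlocks_multiply, smul_one_blocks]
    simp [hA.2, hB.2]

theorem stmt_2 {m n w : ℕ}
    (A₁ A₂ : Matrix (Fin m) (Fin m) ℂ) (B₁ B₂ : Matrix (Fin n) (Fin n) ℂ)
    (hA₁ : IsUnitWeighing w A₁) (hA₂ : IsUnitWeighing w A₂)
    (hB₁ : IsUnitWeighing w B₁) (hB₂ : IsUnitWeighing w B₂) :
    Unbiased w (Matrix.fromBlocks A₁ 0 0 B₁) (Matrix.fromBlocks A₂ 0 0 B₂) ↔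
      Unbiased w A₁ A₂ ∧ Unbiased w B₁ B₂ := by
  by_cases hw : w = 0
  · subst hw
    have hA10 : A₁ = 0 := by
      have := hA₁.2
      rw [Nat.cast_zero, zero_smul] at this
      open scoped ComplexOrder in
      exact Matrix.self_mul_conjTranspose_eq_zero.mp this
    have hB10 : B₁ = 0 := by
      have := hB₁.2
      rw [Nat.cast_zero, zero_smul] at this
      open scoped ComplexOrder in
      exact Matrix.self_mul_conjTranspose_eq_zero.mp this
    have huw0 : ∀ {α : Type} [Fintype α] [DecidableEq α],
        IsUnitWeighing 0 (0 : Matrix α α ℂ) := by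
      intro α _ _
      exact ⟨fun i j => Or.inl rfl, by simp⟩
    constructor
    · intro _
      exact ⟨⟨0, huw0, by simp [hA10]⟩, ⟨0, huw0, by simp [hB10]⟩⟩
    · intro _
      exact ⟨0, huw0, by simp [hA10, hB10]⟩
  · have hs : ((Real.sqrt w : ℝ) : ℂ) ≠ 0 := by
      exact_mod_cast Real.sqrt_ne_zero'.mpr (by positivity)
    constructor
    · rintro ⟨L, hL, hEq⟩
      have hEq' : fromBlocks (A₁ * A₂ᴴ) 0 0 (B₁ * B₂ᴴ) = (Real.sqrt w : ℂ) • L := by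
        rw [← hEq, fromBlocks_conjTranspose, fromBlocks_multiply]
        simp
      have hL12 : ∀ i j, L (Sum.inl i) (Sum.inr j) = 0 := by
        intro i j
        have := congrFun (congrFun hEq' (Sum.inl i)) (Sum.inr j)
        simp only [fromBlocks, of_apply, Sum.elim_inl, Sum.elim_inr, Matrix.zero_apply,
          Matrix.smul_apply, smul_eq_mul] at this
        exact (mul_eq_zero.mp this.symm).resolve_left hs
      have hL21 : ∀ i j, L (Sum.inr i) (Sum.inl j) = 0 := by
        intro i j
        have := congrFun (congrFun hEq' (Sum.inr i)) (Sum.inl j)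
        simp only [fromBlocks, of_apply, Sum.elim_inl, Sum.elim_inr, Matrix.zero_apply,
          Matrix.smul_apply, smul_eq_mul] at this
        exact (mul_eq_zero.mp this.symm).resolve_left hs
      have hLb : L = fromBlocks L.toBlocks₁₁ 0 0 L.toBlocks₂₂ := by
        ext (i | i) (j | j) <;>
          simp [fromBlocks, toBlocks₁₁, toBlocks₂₂, hL12, hL21]
      rw [hLb, fromBlocks_smul, smul_zero] at hEq'
      obtain ⟨e1, -, -, e2⟩ := fromBlocks_inj.mp hEq'
      have hLL := hL.2
      rw [hLb, fromBlocks_conjTranspose, fromBlocks_multiply, smul_one_blocks] at hLL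
      obtain ⟨f1, f2⟩ : L.toBlocks₁₁ * L.toBlocks₁₁ᴴ = (w : ℂ) • 1 ∧
          L.toBlocks₂₂ * L.toBlocks₂₂ᴴ = (w : ℂ) • 1 := by simpa using hLL
      exact ⟨⟨L.toBlocks₁₁, ⟨fun i j => hL.1 _ _, f1⟩, e1⟩,
        ⟨L.toBlocks₂₂, ⟨fun i j => hL.1 _ _, f2⟩, e2⟩⟩
    · rintro ⟨⟨LA, hLA, hEA⟩, ⟨LB, hLB, hEB⟩⟩
      refine ⟨fromBlocks LA 0 0 LB, fromBlocks_uw hLA hLB, ?_⟩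
      rw [fromBlocks_conjTranspose, fromBlocks_multiply, fromBlocks_smul, smul_zero]
      simp [hEA, hEB]
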